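/- arXiv:2409.07219 — 4 statements merged into one kernel-verified Lean document; each statement's English description precedes it below -/
import Mathlib

section
/- Let f : Δ[0,T] → ℝ^{d×d} be continuous and suppose there is a constant K ≥ 0 such that |f(τ,t)| ≤ K ∫_t^T (|f(τ,s)| + |f(s,s)|) ds for all 0 ≤ τ ≤ t ≤ T. Then f ≡ 0 on Δ[0,T]. -/
open intervalIntegral

/-- Nonlocal backward Gronwall-type uniqueness: if a continuous `f` on the triangle
`Δ[0,T]` satisfies `|f(τ,t)| ≤ K ∫_t^T (|f(τ,s)| + |f(s,s)|) ds`, then `f ≡ 0`. -/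
theorem nonlocal_gronwall_zero {E : Type*} [NormedAddCommGroup E]
    (T K : ℝ) (hK : 0 ≤ K) (f : ℝ → ℝ → E)
    (hf : ContinuousOn (fun p : ℝ × ℝ => f p.1 p.2)
      {p : ℝ × ℝ | 0 ≤ p.1 ∧ p.1 ≤ p.2 ∧ p.2 ≤ T})
    (hineq : ∀ τ t, 0 ≤ τ → τ ≤ t → t ≤ T →
      ‖f τ t‖ ≤ K * ∫ s in t..T, (‖f τ s‖ + ‖f s s‖)) :
    ∀ τ t, 0 ≤ τ → τ ≤ t → t ≤ T → f τ t = 0 := by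
  set S : Set (ℝ × ℝ) := {p : ℝ × ℝ | 0 ≤ p.1 ∧ p.1 ≤ p.2 ∧ p.2 ≤ T} with hSdef
  -- S is compact
  have hSc : IsCompact S := by
    have hclosed : IsClosed S := by
      have : S = {p : ℝ × ℝ | 0 ≤ p.1} ∩ ({p | p.1 ≤ p.2} ∩ {p | p.2 ≤ T}) := by
        ext p; simp [hSdef, and_assoc]
      rw [this]
      exact (isClosed_le continuous_const continuous_fst).inter
        ((isClosed_le continuous_fst continuous_snd).inter
          (isClosed_le continuous_snd continuous_const))
    have hsub : S ⊆ Set.Icc ((0:ℝ), (0:ℝ)) (T, T) := by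
      rintro ⟨a, b⟩ ⟨h1, h2, h3⟩
      simp only [Set.mem_Icc, Prod.le_def]
      refine ⟨⟨h1, h1.trans h2⟩, ⟨h2.trans h3, h3⟩⟩
    exact isCompact_Icc.of_isClosed_subset hclosed hsub
  obtain ⟨B, hB⟩ := hSc.exists_bound_of_continuousOn hf
  set C : ℝ := max B 0 with hCdef
  have hC0 : (0:ℝ) ≤ C := le_max_right _ _
  have hCb : ∀ p ∈ S, ‖f p.1 p.2‖ ≤ C := fun p hp => (hB p hp).trans (le_max_left _ _)
  -- continuity of the integrand on [t, T]
  have hcont : ∀ τ t, 0 ≤ τ → τ ≤ t →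
      ContinuousOn (fun s => ‖f τ s‖ + ‖f s s‖) (Set.Icc t T) := by
    intro τ t h1 h2
    have hA : ContinuousOn (fun s : ℝ => f τ s) (Set.Icc t T) :=
      hf.comp (continuous_const.prodMk continuous_id).continuousOn
        (fun s hs => ⟨h1, h2.trans hs.1, hs.2⟩)
    have hD : ContinuousOn (fun s : ℝ => f s s) (Set.Icc t T) :=
      hf.comp (continuous_id.prodMk continuous_id).continuousOn
        (fun s hs => ⟨(h1.trans h2).trans hs.1, le_rfl, hs.2⟩)
    exact hA.norm.add hD.norm
  have hint : ∀ τ t, 0 ≤ τ → τ ≤ t → t ≤ T →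
      IntervalIntegrable (fun s => ‖f τ s‖ + ‖f s s‖) MeasureTheory.volume t T := by
    intro τ t h1 h2 h3
    exact ((hcont τ t h1 h2).mono (by rw [Set.uIcc_of_le h3])).intervalIntegrable
  -- key iteration bound
  have key : ∀ n : ℕ, ∀ τ t, 0 ≤ τ → τ ≤ t → t ≤ T →
      ‖f τ t‖ ≤ C * (2 * K) ^ n * (T - t) ^ n / n.factorial := by
    intro n
    induction n with
    | zero =>
      intro τ t h1 h2 h3
      simpa using hCb (τ, t) ⟨h1, h2, h3⟩
    | succ n ih =>
      intro τ t h1 h2 h3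
      have hTt : (0:ℝ) ≤ T - t := by linarith
      set c : ℝ := 2 * (C * (2 * K) ^ n / n.factorial) with hcdef
      have hbound : ∀ s ∈ Set.Icc t T,
          ‖f τ s‖ + ‖f s s‖ ≤ c * (T - s) ^ n := by
        intro s hs
        have e1 := ih τ s h1 (h2.trans hs.1) hs.2
        have e2 := ih s s ((h1.trans h2).trans hs.1) le_rfl hs.2
        rw [hcdef]; ring_nf; ring_nf at e1 e2; linarith
      have hi1 := hint τ t h1 h2 h3
      have hi2 : IntervalIntegrable (fun s => c * (T - s) ^ n) MeasureTheory.volume t T := by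
        apply Continuous.intervalIntegrable
        continuity
      have hmono : (∫ s in t..T, (‖f τ s‖ + ‖f s s‖)) ≤ ∫ s in t..T, c * (T - s) ^ n :=
        integral_mono_on h3 hi1 hi2 hbound
      have hval : (∫ s in t..T, c * (T - s) ^ n) = c * ((T - t) ^ (n + 1) / (n + 1)) := by
        rw [intervalIntegral.integral_const_mul]
        congr 1
        have : (∫ s in t..T, (T - s) ^ n) = ∫ x in (T - T)..(T - t), x ^ n := by
          simpa using intervalIntegral.integral_comp_sub_left (a := t) (b := T)
            (fun x : ℝ => x ^ n) T
        rw [this]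
        simp [integral_pow]
      have step : ‖f τ t‖ ≤ K * (c * ((T - t) ^ (n + 1) / (n + 1))) := by
        calc ‖f τ t‖ ≤ K * ∫ s in t..T, (‖f τ s‖ + ‖f s s‖) := hineq τ t h1 h2 h3
          _ ≤ K * ∫ s in t..T, c * (T - s) ^ n := mul_le_mul_of_nonneg_left hmono hK
          _ = K * (c * ((T - t) ^ (n + 1) / (n + 1))) := by rw [hval]
      refine step.trans (le_of_eq ?_)
      rw [hcdef, Nat.factorial_succ]
      have hn : ((n.factorial : ℝ)) ≠ 0 := by positivity
      push_cast
      field_simp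
      ring
  -- pass to the limit
  intro τ t h1 h2 h3
  have hle : ∀ n : ℕ, ‖f τ t‖ ≤ C * (2 * K * (T - t)) ^ n / n.factorial := by
    intro n
    have := key n τ t h1 h2 h3
    calc ‖f τ t‖ ≤ C * (2 * K) ^ n * (T - t) ^ n / n.factorial := this
      _ = C * (2 * K * (T - t)) ^ n / n.factorial := by
        rw [show (2 * K * (T - t)) ^ n = (2 * K) ^ n * (T - t) ^ n from mul_pow _ _ _]; ring
  have htend : Filter.Tendsto (fun n : ℕ => C * (2 * K * (T - t)) ^ n / n.factorial)
      Filter.atTop (nhds 0) := by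
    have h := FloorSemiring.tendsto_pow_div_factorial_atTop (2 * K * (T - t))
    have := h.const_mul C
    simpa [mul_div_assoc] using this
  have : ‖f τ t‖ ≤ 0 := ge_of_tendsto' htend hle
  simpa using le_antisymm this (norm_nonneg _)
end

section
/- Uniqueness for a nonlocal linear terminal value problem via contraction: let 𝒜, ℬ₁, ℬ₂ and 𝒞ᵢ, 𝒞₋ᵢ (i = 1,…,K) be continuous bounded matrix-valued functions on Δ[0,T]. Then the only continuous function Λ̄ : Δ[0,T] → ℝ^{d×d}, C¹ in t, satisfying Λ̄'(τ;t) + Λ̄(τ;t)𝒜(t) + 𝒜(t)ᵀΛ̄(τ;t) + ℬ₁(t)ᵀΛ̄(τ;t)ℬ₁(t) + ℬ₂(t)ᵀΛ̄(τ;t)ℬ₂(t) + Σ_{i=1}^{K} 𝒞ᵢ(τ;t) Λ̄(t;t) 𝒞₋ᵢ(τ;t) = 0 for 0 ≤ τ ≤ t ≤ T with Λ̄(τ;T) = 0 for all τ, is Λ̄ ≡ 0. -/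
set_option maxHeartbeats 1000000


open Set Matrix

attribute [local instance] Matrix.linftyOpNormedAddCommGroup Matrix.linftyOpNormedSpace

/-- Uniqueness for the nonlocal linear terminal value problem: if `Λ̄` is continuous on the
triangle `Δ[0,T]`, `C¹` in `t`, satisfies
`Λ̄'(τ;t) + Λ̄(τ;t)𝒜(t) + 𝒜(t)ᵀΛ̄(τ;t) + ℬ₁(t)ᵀΛ̄(τ;t)ℬ₁(t) + ℬ₂(t)ᵀΛ̄(τ;t)ℬ₂(t)
  + Σᵢ 𝒞ᵢ(τ;t) Λ̄(t;t) 𝒞₋ᵢ(τ;t) = 0` and `Λ̄(τ;T) = 0`, then `Λ̄ ≡ 0` on the triangle. -/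
theorem nonlocal_terminal_value_uniqueness {d K : ℕ} (T : ℝ) (hT : 0 ≤ T)
    (𝒜 ℬ₁ ℬ₂ : ℝ → Matrix (Fin d) (Fin d) ℝ)
    (𝒞 𝒞' : Fin K → ℝ → ℝ → Matrix (Fin d) (Fin d) ℝ)
    (h𝒜 : ContinuousOn 𝒜 (Icc 0 T)) (hℬ₁ : ContinuousOn ℬ₁ (Icc 0 T))
    (hℬ₂ : ContinuousOn ℬ₂ (Icc 0 T))
    (h𝒞 : ∀ i, ContinuousOn (fun p : ℝ × ℝ => 𝒞 i p.1 p.2)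
      {p : ℝ × ℝ | 0 ≤ p.1 ∧ p.1 ≤ p.2 ∧ p.2 ≤ T})
    (h𝒞' : ∀ i, ContinuousOn (fun p : ℝ × ℝ => 𝒞' i p.1 p.2)
      {p : ℝ × ℝ | 0 ≤ p.1 ∧ p.1 ≤ p.2 ∧ p.2 ≤ T})
    (M : ℝ)
    (hM𝒜 : ∀ t ∈ Icc (0 : ℝ) T, ‖𝒜 t‖ ≤ M)
    (hMℬ₁ : ∀ t ∈ Icc (0 : ℝ) T, ‖ℬ₁ t‖ ≤ M)
    (hMℬ₂ : ∀ t ∈ Icc (0 : ℝ) T, ‖ℬ₂ t‖ ≤ M)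
    (hM𝒞 : ∀ i, ∀ τ t, 0 ≤ τ → τ ≤ t → t ≤ T → ‖𝒞 i τ t‖ ≤ M ∧ ‖𝒞' i τ t‖ ≤ M)
    (Λ : ℝ → ℝ → Matrix (Fin d) (Fin d) ℝ)
    (hΛcont : ContinuousOn (fun p : ℝ × ℝ => Λ p.1 p.2)
      {p : ℝ × ℝ | 0 ≤ p.1 ∧ p.1 ≤ p.2 ∧ p.2 ≤ T})
    (hode : ∀ τ t, 0 ≤ τ → τ ≤ t → t ≤ T →
      HasDerivWithinAt (Λ τ)
        (-(Λ τ t * 𝒜 t + (𝒜 t)ᵀ * Λ τ t + (ℬ₁ t)ᵀ * Λ τ t * ℬ₁ t + (ℬ₂ t)ᵀ * Λ τ t * ℬ₂ t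
          + ∑ i : Fin K, 𝒞 i τ t * Λ t t * 𝒞' i τ t))
        (Icc τ T) t)
    (hterm : ∀ τ ∈ Icc (0 : ℝ) T, Λ τ T = 0) :
    ∀ τ t, 0 ≤ τ → τ ≤ t → t ≤ T → Λ τ t = 0 := by
  set S : Set (ℝ × ℝ) := {p : ℝ × ℝ | 0 ≤ p.1 ∧ p.1 ≤ p.2 ∧ p.2 ≤ T} with hS
  have hScomp : IsCompact S := by
    have h1 : IsCompact ((Icc (0:ℝ) T ×ˢ Icc (0:ℝ) T) ∩ {p : ℝ × ℝ | p.1 ≤ p.2}) :=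
      (isCompact_Icc.prod isCompact_Icc).inter_right
        (isClosed_le continuous_fst continuous_snd)
    convert h1 using 1
    ext p
    simp only [hS, mem_setOf_eq, mem_inter_iff, mem_prod, mem_Icc]
    constructor
    · rintro ⟨h1, h2, h3⟩; exact ⟨⟨⟨h1, by linarith⟩, ⟨by linarith, h3⟩⟩, h2⟩
    · rintro ⟨⟨⟨h1, _⟩, ⟨_, h3⟩⟩, h2⟩; exact ⟨h1, h2, h3⟩
  obtain ⟨B, hB⟩ := hScomp.exists_bound_of_continuousOn hΛcont
  have hB0 : 0 ≤ B := le_trans (norm_nonneg _) (hB (0, 0) ⟨le_rfl, le_rfl, hT⟩)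
  have htrans : ∀ (F : ℝ → Matrix (Fin d) (Fin d) ℝ), ContinuousOn F (Icc 0 T) →
      ∃ C, ∀ t ∈ Icc (0:ℝ) T, ‖(F t)ᵀ‖ ≤ C := by
    intro F hF
    obtain ⟨C, hC⟩ := isCompact_Icc.exists_bound_of_continuousOn
      ((Continuous.matrix_transpose continuous_id).comp_continuousOn hF)
    exact ⟨C, hC⟩
  obtain ⟨C𝒜, hC𝒜⟩ := htrans 𝒜 h𝒜
  obtain ⟨Cℬ₁, hCℬ₁⟩ := htrans ℬ₁ hℬ₁
  obtain ⟨Cℬ₂, hCℬ₂⟩ := htrans ℬ₂ hℬ₂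
  set C : ℝ := max 0 (max (max (max C𝒜 Cℬ₁) Cℬ₂) M) with hCdef
  have hC0 : 0 ≤ C := le_max_left _ _
  have hCM : M ≤ C := le_max_of_le_right (le_max_right _ _)
  have hC𝒜' : ∀ t ∈ Icc (0:ℝ) T, ‖(𝒜 t)ᵀ‖ ≤ C := fun t ht =>
    (hC𝒜 t ht).trans (le_max_of_le_right (le_max_of_le_left (le_max_of_le_left (le_max_left _ _))))
  have hCℬ₁' : ∀ t ∈ Icc (0:ℝ) T, ‖(ℬ₁ t)ᵀ‖ ≤ C := fun t ht =>
    (hCℬ₁ t ht).trans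
      (le_max_of_le_right (le_max_of_le_left (le_max_of_le_left (le_max_right _ _))))
  have hCℬ₂' : ∀ t ∈ Icc (0:ℝ) T, ‖(ℬ₂ t)ᵀ‖ ≤ C := fun t ht =>
    (hCℬ₂ t ht).trans (le_max_of_le_right (le_max_of_le_left (le_max_right _ _)))
  have hC𝒜'' : ∀ t ∈ Icc (0:ℝ) T, ‖𝒜 t‖ ≤ C := fun t ht => (hM𝒜 t ht).trans hCM
  have hCℬ₁'' : ∀ t ∈ Icc (0:ℝ) T, ‖ℬ₁ t‖ ≤ C := fun t ht => (hMℬ₁ t ht).trans hCM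
  have hCℬ₂'' : ∀ t ∈ Icc (0:ℝ) T, ‖ℬ₂ t‖ ≤ C := fun t ht => (hMℬ₂ t ht).trans hCM
  set C0 : ℝ := 2 * C + 2 * C ^ 2 + K * C ^ 2 with hC0def
  have hC00 : 0 ≤ C0 := by positivity
  set G : ℝ → ℝ → Matrix (Fin d) (Fin d) ℝ := fun τ t =>
    Λ τ t * 𝒜 t + (𝒜 t)ᵀ * Λ τ t + (ℬ₁ t)ᵀ * Λ τ t * ℬ₁ t + (ℬ₂ t)ᵀ * Λ τ t * ℬ₂ t
      + ∑ i : Fin K, 𝒞 i τ t * Λ t t * 𝒞' i τ t with hG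
  have hGbound : ∀ τ t, 0 ≤ τ → τ ≤ t → t ≤ T →
      ‖G τ t‖ ≤ C0 * (‖Λ τ t‖ + ‖Λ t t‖) := by
    intro τ t hτ0 hτt htT
    have htmem : t ∈ Icc (0:ℝ) T := ⟨le_trans hτ0 hτt, htT⟩
    have h1 : ‖Λ τ t * 𝒜 t‖ ≤ ‖Λ τ t‖ * C :=
      le_trans (Matrix.linfty_opNorm_mul _ _)
        (mul_le_mul_of_nonneg_left (hC𝒜'' t htmem) (norm_nonneg _))
    have h2 : ‖(𝒜 t)ᵀ * Λ τ t‖ ≤ C * ‖Λ τ t‖ :=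
      le_trans (Matrix.linfty_opNorm_mul _ _)
        (mul_le_mul_of_nonneg_right (hC𝒜' t htmem) (norm_nonneg _))
    have h3 : ‖(ℬ₁ t)ᵀ * Λ τ t * ℬ₁ t‖ ≤ C * ‖Λ τ t‖ * C := by
      refine le_trans (Matrix.linfty_opNorm_mul _ _) ?_
      refine mul_le_mul ?_ (hCℬ₁'' t htmem) (norm_nonneg _) (by positivity)
      refine le_trans (Matrix.linfty_opNorm_mul _ _) ?_
      exact mul_le_mul_of_nonneg_right (hCℬ₁' t htmem) (norm_nonneg _)
    have h4 : ‖(ℬ₂ t)ᵀ * Λ τ t * ℬ₂ t‖ ≤ C * ‖Λ τ t‖ * C := by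
      refine le_trans (Matrix.linfty_opNorm_mul _ _) ?_
      refine mul_le_mul ?_ (hCℬ₂'' t htmem) (norm_nonneg _) (by positivity)
      refine le_trans (Matrix.linfty_opNorm_mul _ _) ?_
      exact mul_le_mul_of_nonneg_right (hCℬ₂' t htmem) (norm_nonneg _)
    have h5 : ‖∑ i : Fin K, 𝒞 i τ t * Λ t t * 𝒞' i τ t‖ ≤ K * (C * ‖Λ t t‖ * C) := by
      refine le_trans (norm_sum_le _ _) ?_
      have hterm' : ∀ i : Fin K, ‖𝒞 i τ t * Λ t t * 𝒞' i τ t‖ ≤ C * ‖Λ t t‖ * C := by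
        intro i
        obtain ⟨hc, hc'⟩ := hM𝒞 i τ t hτ0 hτt htT
        refine le_trans (Matrix.linfty_opNorm_mul _ _) ?_
        refine mul_le_mul ?_ (hc'.trans hCM) (norm_nonneg _) (by positivity)
        refine le_trans (Matrix.linfty_opNorm_mul _ _) ?_
        exact mul_le_mul_of_nonneg_right (hc.trans hCM) (norm_nonneg _)
      calc ∑ i : Fin K, ‖𝒞 i τ t * Λ t t * 𝒞' i τ t‖
          ≤ ∑ _i : Fin K, (C * ‖Λ t t‖ * C) := Finset.sum_le_sum (fun i _ => hterm' i)
        _ = K * (C * ‖Λ t t‖ * C) := by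
            rw [Finset.sum_const, Finset.card_univ, Fintype.card_fin, nsmul_eq_mul]
    calc ‖G τ t‖ ≤ ‖Λ τ t * 𝒜 t + (𝒜 t)ᵀ * Λ τ t + (ℬ₁ t)ᵀ * Λ τ t * ℬ₁ t
          + (ℬ₂ t)ᵀ * Λ τ t * ℬ₂ t‖ + ‖∑ i : Fin K, 𝒞 i τ t * Λ t t * 𝒞' i τ t‖ :=
        norm_add_le _ _
      _ ≤ (‖Λ τ t * 𝒜 t + (𝒜 t)ᵀ * Λ τ t + (ℬ₁ t)ᵀ * Λ τ t * ℬ₁ t‖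
          + ‖(ℬ₂ t)ᵀ * Λ τ t * ℬ₂ t‖) + ‖∑ i : Fin K, 𝒞 i τ t * Λ t t * 𝒞' i τ t‖ := by
        gcongr; exact norm_add_le _ _
      _ ≤ ((‖Λ τ t * 𝒜 t + (𝒜 t)ᵀ * Λ τ t‖ + ‖(ℬ₁ t)ᵀ * Λ τ t * ℬ₁ t‖)
          + ‖(ℬ₂ t)ᵀ * Λ τ t * ℬ₂ t‖) + ‖∑ i : Fin K, 𝒞 i τ t * Λ t t * 𝒞' i τ t‖ := by
        gcongr; exact norm_add_le _ _
      _ ≤ (((‖Λ τ t * 𝒜 t‖ + ‖(𝒜 t)ᵀ * Λ τ t‖) + ‖(ℬ₁ t)ᵀ * Λ τ t * ℬ₁ t‖)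
          + ‖(ℬ₂ t)ᵀ * Λ τ t * ℬ₂ t‖) + ‖∑ i : Fin K, 𝒞 i τ t * Λ t t * 𝒞' i τ t‖ := by
        gcongr; exact norm_add_le _ _
      _ ≤ (((‖Λ τ t‖ * C + C * ‖Λ τ t‖) + C * ‖Λ τ t‖ * C) + C * ‖Λ τ t‖ * C)
          + K * (C * ‖Λ t t‖ * C) :=
        add_le_add (add_le_add (add_le_add (add_le_add h1 h2) h3) h4) h5
      _ ≤ C0 * (‖Λ τ t‖ + ‖Λ t t‖) := by
        rw [hC0def]
        have h6 : (0:ℝ) ≤ ‖Λ τ t‖ := norm_nonneg _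
        have h7 : (0:ℝ) ≤ ‖Λ t t‖ := norm_nonneg _
        have h8 : (0:ℝ) ≤ (K : ℝ) := Nat.cast_nonneg _
        nlinarith [sq_nonneg C, mul_nonneg hC0 h6, mul_nonneg hC0 h7,
          mul_nonneg (mul_nonneg hC0 hC0) h6, mul_nonneg (mul_nonneg hC0 hC0) h7,
          mul_nonneg (mul_nonneg h8 (mul_nonneg hC0 hC0)) h6,
          mul_nonneg (mul_nonneg h8 hC0) h6, mul_nonneg h8 h6]
  have hGcont : ∀ τ, 0 ≤ τ → τ ≤ T → ContinuousOn (fun s => G τ s) (Icc τ T) := by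
    intro τ hτ0 hτT
    have hmap : MapsTo (fun s : ℝ => ((τ, s) : ℝ × ℝ)) (Icc τ T) S := by
      intro s hs; exact ⟨hτ0, hs.1, hs.2⟩
    have hmapd : MapsTo (fun s : ℝ => ((s, s) : ℝ × ℝ)) (Icc τ T) S := by
      intro s hs; exact ⟨le_trans hτ0 hs.1, le_rfl, hs.2⟩
    have hmapI : MapsTo (fun s : ℝ => s) (Icc τ T) (Icc 0 T) := by
      intro s hs; exact ⟨le_trans hτ0 hs.1, hs.2⟩
    have hcτ : ContinuousOn (fun s : ℝ => ((τ, s) : ℝ × ℝ)) (Icc τ T) :=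
      (continuous_const.prodMk continuous_id).continuousOn
    have hcd : ContinuousOn (fun s : ℝ => ((s, s) : ℝ × ℝ)) (Icc τ T) :=
      (continuous_id.prodMk continuous_id).continuousOn
    have hΛ1 : ContinuousOn (fun s => Λ τ s) (Icc τ T) := hΛcont.comp hcτ hmap
    have hΛ2 : ContinuousOn (fun s => Λ s s) (Icc τ T) := hΛcont.comp hcd hmapd
    have h𝒜c : ContinuousOn (fun s => 𝒜 s) (Icc τ T) := h𝒜.comp continuousOn_id hmapI
    have hℬ₁c : ContinuousOn (fun s => ℬ₁ s) (Icc τ T) := hℬ₁.comp continuousOn_id hmapI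
    have hℬ₂c : ContinuousOn (fun s => ℬ₂ s) (Icc τ T) := hℬ₂.comp continuousOn_id hmapI
    have h𝒜ct : ContinuousOn (fun s => (𝒜 s)ᵀ) (Icc τ T) :=
      (Continuous.matrix_transpose continuous_id).comp_continuousOn h𝒜c
    have hℬ₁ct : ContinuousOn (fun s => (ℬ₁ s)ᵀ) (Icc τ T) :=
      (Continuous.matrix_transpose continuous_id).comp_continuousOn hℬ₁c
    have hℬ₂ct : ContinuousOn (fun s => (ℬ₂ s)ᵀ) (Icc τ T) :=
      (Continuous.matrix_transpose continuous_id).comp_continuousOn hℬ₂c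
    have hsum : ContinuousOn (fun s => ∑ i : Fin K, 𝒞 i τ s * Λ s s * 𝒞' i τ s) (Icc τ T) := by
      apply continuousOn_finset_sum
      intro i _
      have hc1 : ContinuousOn (fun s => 𝒞 i τ s) (Icc τ T) := (h𝒞 i).comp hcτ hmap
      have hc2 : ContinuousOn (fun s => 𝒞' i τ s) (Icc τ T) := (h𝒞' i).comp hcτ hmap
      exact (hc1.mul hΛ2).mul hc2
    exact ((((hΛ1.mul h𝒜c).add (h𝒜ct.mul hΛ1)).add ((hℬ₁ct.mul hΛ1).mul hℬ₁c)).add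
      ((hℬ₂ct.mul hΛ1).mul hℬ₂c)).add hsum
  have hrep : ∀ τ t, 0 ≤ τ → τ ≤ t → t ≤ T → Λ τ t = ∫ s in t..T, G τ s := by
    intro τ t hτ0 hτt htT
    have hτT : τ ≤ T := le_trans hτt htT
    have hmap : MapsTo (fun s : ℝ => ((τ, s) : ℝ × ℝ)) (Icc t T) S := by
      intro s hs; exact ⟨hτ0, le_trans hτt hs.1, hs.2⟩
    have hcont : ContinuousOn (Λ τ) (Icc t T) :=
      hΛcont.comp (continuous_const.prodMk continuous_id).continuousOn hmap
    have hint : @IntervalIntegrable _ UniformSpace.toTopologicalSpace NormedAddGroup.toENormedAddMonoid (fun s => -(G τ s)) MeasureTheory.volume t T := by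
      apply ContinuousOn.intervalIntegrable
      rw [uIcc_of_le htT]
      exact ((hGcont τ hτ0 hτT).mono (Icc_subset_Icc_left hτt)).neg
    have hderiv : ∀ x ∈ Ioo t T, HasDerivWithinAt (Λ τ) (-(G τ x)) (Ioi x) x := by
      intro x hx
      have hx' := hode τ x hτ0 (le_trans hτt hx.1.le) hx.2.le
      exact hx'.mono_of_mem_nhdsWithin (Icc_mem_nhdsGT_of_mem ⟨le_trans hτt hx.1.le, hx.2⟩)
    have heq := intervalIntegral.integral_eq_sub_of_hasDeriv_right_of_le htT hcont hderiv hint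
    rw [hterm τ ⟨hτ0, hτT⟩, intervalIntegral.integral_neg, zero_sub] at heq
    exact (neg_injective heq).symm
  have key : ∀ n : ℕ, ∀ τ t, 0 ≤ τ → τ ≤ t → t ≤ T →
      ‖Λ τ t‖ ≤ B * (2 * C0) ^ n * (T - t) ^ n / n.factorial := by
    intro n
    induction n with
    | zero =>
      intro τ t hτ0 hτt htT
      simpa using hB (τ, t) ⟨hτ0, hτt, htT⟩
    | succ n ih =>
      intro τ t hτ0 hτt htT
      have hτT : τ ≤ T := le_trans hτt htT
      rw [hrep τ t hτ0 hτt htT]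
      have hGint : IntervalIntegrable (fun s => ‖G τ s‖) MeasureTheory.volume t T := by
        apply ContinuousOn.intervalIntegrable
        rw [uIcc_of_le htT]
        exact ((hGcont τ hτ0 hτT).mono (Icc_subset_Icc_left hτt)).norm
      have hgint : IntervalIntegrable
          (fun s => (2 * C0) * (B * (2 * C0) ^ n / n.factorial) * (T - s) ^ n)
          MeasureTheory.volume t T := by
        apply ContinuousOn.intervalIntegrable
        exact (continuous_const.mul ((continuous_const.sub continuous_id).pow n)).continuousOn
      have h1 : ‖∫ s in t..T, G τ s‖ ≤ ∫ s in t..T, ‖G τ s‖ :=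
        intervalIntegral.norm_integral_le_integral_norm htT
      have h2 : ∫ s in t..T, ‖G τ s‖ ≤
          ∫ s in t..T, (2 * C0) * (B * (2 * C0) ^ n / n.factorial) * (T - s) ^ n := by
        apply intervalIntegral.integral_mono_on htT hGint hgint
        intro s hs
        have hτs : τ ≤ s := le_trans hτt hs.1
        have hs0 : 0 ≤ s := le_trans hτ0 hτs
        have b1 := ih τ s hτ0 hτs hs.2
        have b2 := ih s s hs0 le_rfl hs.2
        calc ‖G τ s‖ ≤ C0 * (‖Λ τ s‖ + ‖Λ s s‖) := hGbound τ s hτ0 hτs hs.2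
          _ ≤ C0 * (B * (2 * C0) ^ n * (T - s) ^ n / n.factorial
              + B * (2 * C0) ^ n * (T - s) ^ n / n.factorial) := by
            apply mul_le_mul_of_nonneg_left _ hC00
            exact add_le_add b1 b2
          _ = (2 * C0) * (B * (2 * C0) ^ n / n.factorial) * (T - s) ^ n := by ring
      have h3 : ∫ s in t..T, (2 * C0) * (B * (2 * C0) ^ n / n.factorial) * (T - s) ^ n
          = B * (2 * C0) ^ (n + 1) * (T - t) ^ (n + 1) / (n + 1).factorial := by
        rw [intervalIntegral.integral_const_mul]
        have hpow : ∫ s in t..T, (T - s) ^ n = (T - t) ^ (n + 1) / (n + 1) := by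
          rw [intervalIntegral.integral_comp_sub_left (fun u => u ^ n) T]
          simp [integral_pow]
        rw [hpow, Nat.factorial_succ]
        have hn : ((n.factorial : ℝ)) ≠ 0 := Nat.cast_ne_zero.mpr n.factorial_ne_zero
        have hn1 : ((n : ℝ) + 1) ≠ 0 := by positivity
        push_cast
        field_simp
        ring
      calc ‖∫ s in t..T, G τ s‖ ≤ ∫ s in t..T, ‖G τ s‖ := h1
        _ ≤ ∫ s in t..T, (2 * C0) * (B * (2 * C0) ^ n / n.factorial) * (T - s) ^ n := h2
        _ = B * (2 * C0) ^ (n + 1) * (T - t) ^ (n + 1) / (n + 1).factorial := h3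
  intro τ t hτ0 hτt htT
  have hnorm : ∀ n : ℕ, ‖Λ τ t‖ ≤ B * (2 * C0 * (T - t)) ^ n / n.factorial := by
    intro n
    have h := key n τ t hτ0 hτt htT
    calc ‖Λ τ t‖ ≤ B * (2 * C0) ^ n * (T - t) ^ n / n.factorial := h
      _ = B * (2 * C0 * (T - t)) ^ n / n.factorial := by rw [mul_pow (2 * C0) (T - t) n, ← mul_assoc]
  have hlim : Filter.Tendsto (fun n : ℕ => B * (2 * C0 * (T - t)) ^ n / n.factorial)
      Filter.atTop (nhds 0) := by
    have h := (FloorSemiring.tendsto_pow_div_factorial_atTop (K := ℝ)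
      (2 * C0 * (T - t))).const_mul B
    simpa [mul_div_assoc] using h
  have hle : ‖Λ τ t‖ ≤ 0 := ge_of_tendsto hlim (Filter.Eventually.of_forall hnorm)
  exact norm_le_zero_iff.mp hle
end

section
/- Exact solution of the mean-variance κ-equation: let ρ, θ, θ₀ : [0,T] → ℝ be continuous, θ(t) ≠ 0 and θ(t)² + θ₀(t)² > 0 for all t, λ : [0,T] → (0,∞) continuous, η > 0. Define Λ(τ;t) = (η/2)λ(T−τ)exp(∫_t^T (2r(s) − ρ(s)²/(θ(s)²+θ₀(s)²)) ds) and γ(τ;t) = −λ(T−τ)exp(∫_t^T r(s) ds) for continuous r. Then κ(τ;t) = −(1/(2η)) λ(T−τ) ∫_t^T (ρ(s)²/θ(s)²) exp( ∫_s^T ρ(v)²/(θ(v)²+θ₀(v)²) dv ) ds satisfies κ(τ;T) = 0 and κ'(τ;t) + (1/4)K₁(t,τ)γ(t;t)² − (1/2)K₂(t,τ)γ(t;t)γ(τ;t) = 0, where K₁(t,τ) = ρ(t)²θ(t)²Λ(τ;t)/(θ(t)²Λ(t;t))² and K₂(t,τ) = ρ(t)²/(θ(t)²Λ(t;t)) (these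 are the formulas with β ≡ 0). -/
open Set intervalIntegral

/-- Exact solution of the mean-variance κ-equation: with
`Λ(τ;t) = (η/2)λ(T-τ)exp(∫_t^T (2r - ρ²/(θ²+θ₀²)))`,
`γ(τ;t) = -λ(T-τ)exp(∫_t^T r)`,
`K₁(t,τ) = ρ(t)²θ(t)²Λ(τ;t)/(θ(t)²Λ(t;t))²` and `K₂(t,τ) = ρ(t)²/(θ(t)²Λ(t;t))`,
the function `κ(τ;t) = -(1/(2η)) λ(T-τ) ∫_t^T (ρ²/θ²) exp(∫_s^T ρ²/(θ²+θ₀²)) ds`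
satisfies `κ(τ;T) = 0` and `κ' + (1/4)K₁γ(t;t)² - (1/2)K₂γ(t;t)γ(τ;t) = 0` on `[τ,T]`. -/
theorem mean_variance_kappa_solution (T : ℝ) (r ρ θ θ₀ lam : ℝ → ℝ) (η : ℝ) (hη : 0 < η)
    (hr : ContinuousOn r (Icc 0 T)) (hρ : ContinuousOn ρ (Icc 0 T))
    (hθ : ContinuousOn θ (Icc 0 T)) (hθ₀ : ContinuousOn θ₀ (Icc 0 T))
    (hθne : ∀ t ∈ Icc (0 : ℝ) T, θ t ≠ 0)
    (hnd : ∀ t ∈ Icc (0 : ℝ) T, 0 < θ t ^ 2 + θ₀ t ^ 2)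
    (hlam : ContinuousOn lam (Icc 0 T)) (hlam_pos : ∀ s ∈ Icc (0 : ℝ) T, 0 < lam s)
    (Λ γ : ℝ → ℝ → ℝ) (K₁ K₂ : ℝ → ℝ → ℝ) (κ : ℝ → ℝ → ℝ)
    (hΛ : ∀ τ t, Λ τ t = η / 2 * lam (T - τ) *
      Real.exp (∫ s in t..T, (2 * r s - ρ s ^ 2 / (θ s ^ 2 + θ₀ s ^ 2))))
    (hγ : ∀ τ t, γ τ t = -lam (T - τ) * Real.exp (∫ s in t..T, r s))
    (hK₁ : ∀ t τ, K₁ t τ = ρ t ^ 2 * θ t ^ 2 * Λ τ t / (θ t ^ 2 * Λ t t) ^ 2)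
    (hK₂ : ∀ t τ, K₂ t τ = ρ t ^ 2 / (θ t ^ 2 * Λ t t))
    (hκ : ∀ τ t, κ τ t = -(1 / (2 * η)) * lam (T - τ) *
      ∫ s in t..T, ρ s ^ 2 / θ s ^ 2 *
        Real.exp (∫ v in s..T, ρ v ^ 2 / (θ v ^ 2 + θ₀ v ^ 2)))
    (τ : ℝ) (hτ : τ ∈ Icc (0 : ℝ) T) :
    κ τ T = 0 ∧
    ∀ t ∈ Icc τ T,
      HasDerivWithinAt (κ τ)
        (-(1 / 4 * K₁ t τ * γ t t ^ 2 - 1 / 2 * K₂ t τ * γ t t * γ τ t))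
        (Icc τ T) t := by
  have h0T : (0 : ℝ) ≤ T := le_trans hτ.1 hτ.2
  set h : ℝ → ℝ := fun v => ρ v ^ 2 / (θ v ^ 2 + θ₀ v ^ 2) with hh
  have hconth : ContinuousOn h (Icc 0 T) :=
    (hρ.pow 2).div ((hθ.pow 2).add (hθ₀.pow 2)) (fun x hx => (hnd x hx).ne')
  set hE : ℝ → ℝ := IccExtend h0T ((Icc 0 T).restrict h) with hhE
  have hcontE : Continuous hE := hconth.restrict.Icc_extend'
  have hEeq : ∀ x ∈ Icc (0 : ℝ) T, hE x = h x := fun x hx => IccExtend_of_mem h0T _ hx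
  have hinteq : ∀ x ∈ Icc (0 : ℝ) T, (∫ v in x..T, h v) = ∫ v in x..T, hE v := by
    intro x hx
    refine intervalIntegral.integral_congr fun y hy => (hEeq y ?_).symm
    have hsub' : uIcc x T ⊆ Icc 0 T := by
      rw [uIcc_of_le hx.2]; exact Icc_subset_Icc hx.1 le_rfl
    exact hsub' hy
  have hHcont : Continuous fun s => ∫ v in s..T, hE v := by
    have h1 := intervalIntegral.continuous_primitive
      (μ := MeasureTheory.volume) (fun a b => hcontE.intervalIntegrable a b) T
    have h2 : Continuous fun s => -∫ v in T..s, hE v := h1.neg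
    simpa [intervalIntegral.integral_symm T] using h2
  set g : ℝ → ℝ := fun s => ρ s ^ 2 / θ s ^ 2 * Real.exp (∫ v in s..T, h v) with hg
  have hcontg : ContinuousOn g (Icc 0 T) := by
    have h1 : ContinuousOn (fun s => ρ s ^ 2 / θ s ^ 2) (Icc 0 T) :=
      (hρ.pow 2).div (hθ.pow 2) (fun x hx => pow_ne_zero 2 (hθne x hx))
    have h2 : ContinuousOn (fun s => Real.exp (∫ v in s..T, h v)) (Icc 0 T) := by
      have h3 : ContinuousOn (fun s => Real.exp (∫ v in s..T, hE v)) (Icc 0 T) :=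
        (Real.continuous_exp.comp hHcont).continuousOn
      exact h3.congr fun x hx => by rw [hinteq x hx]
    exact h1.mul h2
  set gE : ℝ → ℝ := IccExtend h0T ((Icc 0 T).restrict g) with hgE
  have hcontgE : Continuous gE := hcontg.restrict.Icc_extend'
  have hgEeq : ∀ x ∈ Icc (0 : ℝ) T, gE x = g x := fun x hx => IccExtend_of_mem h0T _ hx
  have hsub : Icc τ T ⊆ Icc 0 T := Icc_subset_Icc hτ.1 le_rfl
  have hginteq : ∀ t ∈ Icc τ T, (∫ s in t..T, g s) = ∫ s in t..T, gE s := by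
    intro t ht
    refine intervalIntegral.integral_congr fun x hx => (hgEeq x ?_).symm
    have hsub' : uIcc t T ⊆ Icc 0 T := by
      rw [uIcc_of_le ht.2]; exact Icc_subset_Icc (hsub ht).1 le_rfl
    exact hsub' hx
  constructor
  · simp [hκ]
  · intro t ht
    have htT : t ∈ Icc (0 : ℝ) T := hsub ht
    set c : ℝ := -(1 / (2 * η)) * lam (T - τ) with hc
    have hF : HasDerivAt (fun u => c * ∫ s in u..T, gE s) (c * -gE t) t :=
      ((intervalIntegral.integral_hasDerivAt_left
        (hcontgE.intervalIntegrable t T)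
        hcontgE.stronglyMeasurable.stronglyMeasurableAtFilter
        hcontgE.continuousAt)).const_mul c
    have hFW : HasDerivWithinAt (κ τ) (c * -gE t) (Icc τ T) t := by
      refine hF.hasDerivWithinAt.congr (fun u hu => ?_) ?_
      · rw [hκ]
        show -(1 / (2 * η)) * lam (T - τ) * ∫ s in u..T, g s = _
        rw [hginteq u hu]
      · rw [hκ]
        show -(1 / (2 * η)) * lam (T - τ) * ∫ s in t..T, g s = _
        rw [hginteq t ht]
    have hval : c * -gE t
        = -(1 / 4 * K₁ t τ * γ t t ^ 2 - 1 / 2 * K₂ t τ * γ t t * γ τ t) := by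
      have hTt : T - t ∈ Icc (0 : ℝ) T := ⟨by linarith [htT.2], by linarith [htT.1]⟩
      have hTτ : T - τ ∈ Icc (0 : ℝ) T := ⟨by linarith [hτ.2], by linarith [hτ.1]⟩
      have hbne : lam (T - t) ≠ 0 := (hlam_pos _ hTt).ne'
      have hane : lam (T - τ) ≠ 0 := (hlam_pos _ hTτ).ne'
      have hθt : θ t ≠ 0 := hθne t htT
      have hsub' : uIcc t T ⊆ Icc 0 T := by
        rw [uIcc_of_le htT.2]; exact Icc_subset_Icc htT.1 le_rfl
      have hrint : IntervalIntegrable r MeasureTheory.volume t T :=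
        (hr.mono hsub').intervalIntegrable
      have hhint : IntervalIntegrable h MeasureTheory.volume t T :=
        (hconth.mono hsub').intervalIntegrable
      have hsplit : (∫ s in t..T, (2 * r s - ρ s ^ 2 / (θ s ^ 2 + θ₀ s ^ 2)))
          = 2 * (∫ s in t..T, r s) - ∫ s in t..T, h s := by
        rw [intervalIntegral.integral_sub (hrint.const_mul 2) hhint,
          intervalIntegral.integral_const_mul]
      rw [hgEeq t htT, hK₁, hK₂, hΛ, hΛ, hγ, hγ, hsplit]
      show -(1 / (2 * η)) * lam (T - τ) *
          -(ρ t ^ 2 / θ t ^ 2 * Real.exp (∫ v in t..T, h v)) = _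
      set A := ∫ s in t..T, r s
      set B := ∫ v in t..T, h v
      have hexp : Real.exp (2 * A - B) = Real.exp A ^ 2 / Real.exp B := by
        rw [Real.exp_sub, two_mul, Real.exp_add, pow_two]
      rw [hexp]
      have heA := Real.exp_ne_zero A
      have heB := Real.exp_ne_zero B
      field_simp
      ring
    rwa [hval] at hFW
end

section
/- Bound for the Picard iterate in the inter-bank Riccati equation: fix k > 0, continuous λ : [0,T] → (0,∞) continuously differentiable, constants c, q, η > 0, and a continuous function v : Δ[0,T] → ℝ. Let Λ̃(τ;·) be the solution on [τ,T] of Λ̃'(τ;t) − 2kΛ̃(τ;t) + 2λ(t−τ)v(t;t)² − 4v(τ;t)v(t;t) + (η/2 + kq)λ(t−τ) − (q/2)λ'(t−τ) = 0 with Λ̃(τ;T) = ((c+q)/2)λ(T−τ). Then there is a constant C, depending only on λ, c, q, η (and not on k or v), such that sup_{Δ[0,T]} |Λ̃| ≤ C(1 + (1/k)·sup_{Δ[0,T]} |v|²). -/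
open Set intervalIntegral

set_option maxHeartbeats 1000000

/-- Bound for the Picard iterate in the inter-bank Riccati equation: there is a constant
`C > 0` depending only on `λ`, `c`, `q`, `η` (not on `k` or `v`) such that the solution
`Λ̃(τ;·)` of
`Λ̃' - 2kΛ̃ + 2λ(t-τ)v(t;t)² - 4v(τ;t)v(t;t) + (η/2 + kq)λ(t-τ) - (q/2)λ'(t-τ) = 0`,
`Λ̃(τ;T) = ((c+q)/2)λ(T-τ)`, satisfies `sup |Λ̃| ≤ C(1 + (1/k) sup |v|²)` on the
triangle `Δ[0,T]`. -/
theorem interbank_picard_bound (T : ℝ) (hT : 0 ≤ T) (lam lam' : ℝ → ℝ)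
    (hlam : ∀ s, HasDerivAt lam (lam' s) s)
    (hlam' : Continuous lam')
    (hlam_pos : ∀ s ∈ Icc (0 : ℝ) T, 0 < lam s)
    (c q η : ℝ) (hc : 0 < c) (hq : 0 < q) (hη : 0 < η) :
    ∃ C : ℝ, 0 < C ∧
      ∀ k : ℝ, 0 < k →
      ∀ v : ℝ → ℝ → ℝ,
        ContinuousOn (fun p : ℝ × ℝ => v p.1 p.2)
          {p : ℝ × ℝ | 0 ≤ p.1 ∧ p.1 ≤ p.2 ∧ p.2 ≤ T} →
      ∀ Λ : ℝ → ℝ → ℝ,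
        (∀ τ t, 0 ≤ τ → τ ≤ t → t ≤ T →
          ∃ L' : ℝ, HasDerivWithinAt (Λ τ) L' (Icc τ T) t ∧
            L' - 2 * k * Λ τ t + 2 * lam (t - τ) * v t t ^ 2 - 4 * v τ t * v t t
              + (η / 2 + k * q) * lam (t - τ) - q / 2 * lam' (t - τ) = 0) →
        (∀ τ ∈ Icc (0 : ℝ) T, Λ τ T = (c + q) / 2 * lam (T - τ)) →
      ∀ Mv : ℝ, 0 ≤ Mv →
        (∀ τ t, 0 ≤ τ → τ ≤ t → t ≤ T → |v τ t| ≤ Mv) →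
        ∀ τ t, 0 ≤ τ → τ ≤ t → t ≤ T →
          |Λ τ t| ≤ C * (1 + 1 / k * Mv ^ 2) := by
  have hlamc : Continuous lam := by
    rw [continuous_iff_continuousAt]; exact fun s => (hlam s).continuousAt
  obtain ⟨B₁, hB₁⟩ := (isCompact_Icc (a := (0:ℝ)) (b := T)).exists_bound_of_continuousOn
    hlamc.continuousOn
  obtain ⟨B₂, hB₂⟩ := (isCompact_Icc (a := (0:ℝ)) (b := T)).exists_bound_of_continuousOn
    hlam'.continuousOn
  set B := max B₁ B₂ with hBdef
  have hBlam : ∀ s ∈ Icc (0:ℝ) T, |lam s| ≤ B := fun s hs =>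
    le_trans (by simpa using hB₁ s hs) (le_max_left _ _)
  have hBlam' : ∀ s ∈ Icc (0:ℝ) T, |lam' s| ≤ B := fun s hs =>
    le_trans (by simpa using hB₂ s hs) (le_max_right _ _)
  have hB0 : 0 ≤ B := le_trans (abs_nonneg _) (hBlam 0 ⟨le_refl _, hT⟩)
  have hc1 : (0:ℝ) ≤ (c+q)/2*B := by
    have : (0:ℝ) ≤ (c+q)/2 := by linarith
    exact mul_nonneg this hB0
  have hc2 : (0:ℝ) ≤ q*B/2 := by positivity
  have hQ0 : (0:ℝ) ≤ η/2*B + q/2*B := by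
    have h1 : (0:ℝ) ≤ η/2 := by linarith
    have h2 : (0:ℝ) ≤ q/2 := by linarith
    nlinarith
  have hc3 : (0:ℝ) ≤ (η/2*B + q/2*B)*T := mul_nonneg hQ0 hT
  clear_value B
  refine ⟨(c+q)/2*B + q*B/2 + (η/2*B + q/2*B)*T + (B+2) + 1, by linarith, ?_⟩
  intro k hk v hv Λ hΛ hΛT Mv hMv hvb τ t hτ0 hτt htT
  have hτT : τ ≤ T := le_trans hτt htT
  have ht0 : 0 ≤ t := le_trans hτ0 hτt
  set A : ℝ → ℝ := fun s => 2 * lam (s - τ) * v s s ^ 2 - 4 * v τ s * v s s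
      + (η / 2 + k * q) * lam (s - τ) - q / 2 * lam' (s - τ) with hAdef
  -- the derivative of Λ τ
  have hD : ∀ s ∈ Icc τ T, HasDerivWithinAt (Λ τ) (2*k*Λ τ s - A s) (Icc τ T) s := by
    intro s hs
    obtain ⟨L', h1, h2⟩ := hΛ τ s hτ0 hs.1 hs.2
    have hL : L' = 2*k*Λ τ s - A s := by
      rw [hAdef]; dsimp only; linarith
    rwa [hL] at h1
  have hΛc : ContinuousOn (Λ τ) (Icc τ T) := fun s hs => (hD s hs).continuousWithinAt
  -- continuity of A
  have hvss : ContinuousOn (fun s => v s s) (Icc τ T) := by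
    refine hv.comp ((continuous_id.prodMk continuous_id).continuousOn) ?_
    intro s hs
    exact ⟨le_trans hτ0 hs.1, le_refl s, hs.2⟩
  have hvτs : ContinuousOn (fun s => v τ s) (Icc τ T) := by
    refine hv.comp ((continuous_const.prodMk continuous_id).continuousOn) ?_
    intro s hs
    exact ⟨hτ0, hs.1, hs.2⟩
  have hl1 : ContinuousOn (fun s : ℝ => lam (s - τ)) (Icc τ T) :=
    (hlamc.comp (continuous_id.sub continuous_const)).continuousOn
  have hl2 : ContinuousOn (fun s : ℝ => lam' (s - τ)) (Icc τ T) :=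
    (hlam'.comp (continuous_id.sub continuous_const)).continuousOn
  have hAc : ContinuousOn A (Icc τ T) :=
    ((((continuousOn_const.mul hl1).mul (hvss.pow 2)).sub
      ((continuousOn_const.mul hvτs).mul hvss)).add
      (continuousOn_const.mul hl1)).sub (continuousOn_const.mul hl2)
  -- g = exp(-2ks) Λ τ s
  set g : ℝ → ℝ := fun s => Real.exp (-(2*k)*s) * Λ τ s with hgdef
  have hgD : ∀ s ∈ Icc τ T,
      HasDerivWithinAt g (-(Real.exp (-(2*k)*s) * A s)) (Icc τ T) s := by
    intro s hs
    have h1 : HasDerivAt (fun x : ℝ => -(2*k)*x) (-(2*k)) s := by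
      simpa using (hasDerivAt_id s).const_mul (-(2*k))
    have he : HasDerivAt (fun x : ℝ => Real.exp (-(2*k)*x))
        (Real.exp (-(2*k)*s) * (-(2*k))) s := h1.exp
    have hmul := (he.hasDerivWithinAt).mul (hD s hs)
    have heq : Real.exp (-(2*k)*s) * (-(2*k)) * Λ τ s
        + Real.exp (-(2*k)*s) * (2*k*Λ τ s - A s)
        = -(Real.exp (-(2*k)*s) * A s) := by ring
    rw [heq] at hmul
    exact hmul
  have hgc : ContinuousOn g (Icc τ T) :=
    ((Real.continuous_exp.comp (continuous_const.mul continuous_id)).continuousOn).mul hΛc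
  have hsub : Icc t T ⊆ Icc τ T := Icc_subset_Icc hτt le_rfl
  have hexpc : Continuous (fun s : ℝ => Real.exp (-(2*k)*s)) :=
    Real.continuous_exp.comp (continuous_const.mul continuous_id)
  -- FTC
  have hFTC : (∫ s in t..T, -(Real.exp (-(2*k)*s) * A s)) = g T - g t := by
    apply intervalIntegral.integral_eq_sub_of_hasDeriv_right_of_le htT (hgc.mono hsub)
    · intro x hx
      have hx' : x ∈ Icc τ T := ⟨le_trans hτt hx.1.le, hx.2.le⟩
      exact (hgD x hx').mono_of_mem_nhdsWithin (Icc_mem_nhdsGT_of_mem ⟨le_trans hτt hx.1.le, hx.2⟩)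
    · apply ContinuousOn.intervalIntegrable
      rw [uIcc_of_le htT]
      exact ((hexpc.continuousOn.mul (hAc.mono hsub))).neg
  have hgt : g t = g T + ∫ s in t..T, Real.exp (-(2*k)*s) * A s := by
    rw [intervalIntegral.integral_neg] at hFTC
    linarith
  have hΛeq : Λ τ t = Real.exp (2*k*t) * g T
      + ∫ s in t..T, Real.exp (2*k*t) * (Real.exp (-(2*k)*s) * A s) := by
    have h1 : Λ τ t = Real.exp (2*k*t) * g t := by
      rw [hgdef]; dsimp only
      rw [← mul_assoc, ← Real.exp_add]
      have h0 : 2*k*t + -(2*k)*t = 0 := by ring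
      rw [h0, Real.exp_zero, one_mul]
    rw [h1, hgt, mul_add, intervalIntegral.integral_const_mul]
  -- bounds
  set P : ℝ := (2*B+4)*Mv^2 + k*q*B with hPdef
  set Q : ℝ := η/2*B + q/2*B with hQdef
  clear_value P Q
  have hP0 : 0 ≤ P := by
    have h1 : (0:ℝ) ≤ (2*B+4)*Mv^2 := by positivity
    have h2 : (0:ℝ) ≤ k*q*B := by positivity
    linarith
  have hAbd : ∀ s ∈ Icc t T, |A s| ≤ P + Q := by
    intro s hs
    have hs1 : τ ≤ s := le_trans hτt hs.1
    have hs0 : 0 ≤ s := le_trans hτ0 hs1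
    have h1 : |lam (s - τ)| ≤ B := hBlam _ ⟨by linarith, by linarith [hs.2]⟩
    have h2 : |lam' (s - τ)| ≤ B := hBlam' _ ⟨by linarith, by linarith [hs.2]⟩
    have h3 : |v s s| ≤ Mv := hvb s s hs0 le_rfl hs.2
    have h4 : |v τ s| ≤ Mv := hvb τ s hτ0 hs1 hs.2
    have tri : ∀ a b cc d : ℝ, |a - b + cc - d| ≤ |a| + |b| + |cc| + |d| := by
      intro a b cc d
      rw [abs_le]
      constructor <;>
        linarith [le_abs_self a, neg_abs_le a, le_abs_self b, neg_abs_le b,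
          le_abs_self cc, neg_abs_le cc, le_abs_self d, neg_abs_le d]
    have htri := tri (2 * lam (s - τ) * v s s ^ 2) (4 * v τ s * v s s)
      ((η / 2 + k * q) * lam (s - τ)) (q / 2 * lam' (s - τ))
    have e1 : |2 * lam (s - τ) * v s s ^ 2| ≤ 2*B*Mv^2 := by
      rw [abs_mul, abs_mul, abs_pow, abs_two]
      gcongr
    have e2 : |4 * v τ s * v s s| ≤ 4*Mv*Mv := by
      rw [abs_mul, abs_mul]
      have : |(4:ℝ)| = 4 := by norm_num
      rw [this]
      gcongr
    have e3 : |(η / 2 + k * q) * lam (s - τ)| ≤ (η/2 + k*q)*B := by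
      rw [abs_mul]
      have hη2 : |η / 2 + k * q| = η/2 + k*q := abs_of_pos (by positivity)
      rw [hη2]
      gcongr
    have e4 : |q / 2 * lam' (s - τ)| ≤ q/2*B := by
      rw [abs_mul]
      have : |q / 2| = q/2 := abs_of_pos (by positivity)
      rw [this]
      gcongr
    have hA' : |A s| ≤ 2*B*Mv^2 + 4*Mv*Mv + (η/2 + k*q)*B + q/2*B := by
      rw [hAdef]; dsimp only
      linarith
    have hmm : Mv * Mv = Mv^2 := by ring
    rw [hPdef, hQdef]
    linarith [hA']
  -- pointwise bound of the integrand
  have hpt : ∀ s ∈ Icc t T,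
      |Real.exp (2*k*t) * (Real.exp (-(2*k)*s) * A s)|
        ≤ P * Real.exp (2*k*(t-s)) + Q := by
    intro s hs
    have hexp : Real.exp (2*k*t) * Real.exp (-(2*k)*s) = Real.exp (2*k*(t-s)) := by
      rw [← Real.exp_add]; congr 1; ring
    have h1 : Real.exp (2*k*(t-s)) ≤ 1 := by
      rw [Real.exp_le_one_iff]
      nlinarith [hs.1, hk.le]
    have heq : |Real.exp (2*k*t) * (Real.exp (-(2*k)*s) * A s)|
        = Real.exp (2*k*(t-s)) * |A s| := by
      rw [abs_mul, abs_mul, abs_of_pos (Real.exp_pos _), abs_of_pos (Real.exp_pos _),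
        ← mul_assoc, hexp]
    rw [heq]
    have h2 : Real.exp (2*k*(t-s)) * |A s| ≤ Real.exp (2*k*(t-s)) * (P + Q) :=
      mul_le_mul_of_nonneg_left (hAbd s hs) (Real.exp_pos _).le
    have h3 : Real.exp (2*k*(t-s)) * (P + Q)
        = P * Real.exp (2*k*(t-s)) + Q * Real.exp (2*k*(t-s)) := by ring
    have hQ0' : (0:ℝ) ≤ Q := hQ0
    have h4 : Q * Real.exp (2*k*(t-s)) ≤ Q := mul_le_of_le_one_right hQ0' h1
    linarith [h2, h3 ▸ h2]
  -- the exponential integral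
  have hE : (∫ s in t..T, Real.exp (2*k*(t-s))) ≤ 1/(2*k) := by
    have hder : ∀ s ∈ uIcc t T,
        HasDerivAt (fun s => -(Real.exp (2*k*(t-s)))/(2*k)) (Real.exp (2*k*(t-s))) s := by
      intro s _
      have h1 : HasDerivAt (fun x : ℝ => 2*k*(t-x)) (-(2*k)) s := by
        have := ((hasDerivAt_id s).const_sub t).const_mul (2*k)
        simpa using this
      have h2 := h1.exp
      have h3 := (h2.neg).div_const (2*k)
      convert h3 using 1
      · rfl
      · rfl
      · rfl
      · have hk0 : (2*k) ≠ 0 := by positivity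
        rw [eq_div_iff hk0]; ring
    have hcont : Continuous (fun s : ℝ => Real.exp (2*k*(t-s))) := by
      apply Real.continuous_exp.comp
      exact continuous_const.mul (continuous_const.sub continuous_id)
    have hint := intervalIntegral.integral_eq_sub_of_hasDerivAt hder
      hcont.continuousOn.intervalIntegrable
    have h2k : (0:ℝ) < 2*k := by linarith
    have hE1 : (0:ℝ) < Real.exp (2*k*(t-T)) := Real.exp_pos _
    have hval : (fun s => -(Real.exp (2*k*(t-s)))/(2*k)) T
        - (fun s => -(Real.exp (2*k*(t-s)))/(2*k)) t
        = (1 - Real.exp (2*k*(t-T)))/(2*k) := by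
      simp only
      rw [show 2*k*(t-t) = 0 by ring, Real.exp_zero]
      ring
    rw [hint, hval, div_le_div_iff₀ h2k h2k]
    nlinarith
  have hE0 : (0:ℝ) ≤ ∫ s in t..T, Real.exp (2*k*(t-s)) := by
    apply intervalIntegral.integral_nonneg htT
    intro s _
    exact (Real.exp_pos _).le
  -- integrability
  have hint1 : IntervalIntegrable
      (fun s => |Real.exp (2*k*t) * (Real.exp (-(2*k)*s) * A s)|) MeasureTheory.volume t T := by
    apply ContinuousOn.intervalIntegrable
    rw [uIcc_of_le htT]
    exact ((continuousOn_const.mul (hexpc.continuousOn.mul (hAc.mono hsub)))).abs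
  have hcontE : Continuous (fun s : ℝ => Real.exp (2*k*(t-s))) := by
    apply Real.continuous_exp.comp
    exact continuous_const.mul (continuous_const.sub continuous_id)
  have hint2 : IntervalIntegrable
      (fun s => P * Real.exp (2*k*(t-s)) + Q) MeasureTheory.volume t T :=
    ((continuous_const.mul hcontE).add continuous_const).intervalIntegrable t T
  have hintE : IntervalIntegrable
      (fun s => Real.exp (2*k*(t-s))) MeasureTheory.volume t T :=
    hcontE.intervalIntegrable t T
  -- bound the integral term
  have hItri : |∫ s in t..T, Real.exp (2*k*t) * (Real.exp (-(2*k)*s) * A s)|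
      ≤ P * (1/(2*k)) + Q*T := by
    have s1 : |∫ s in t..T, Real.exp (2*k*t) * (Real.exp (-(2*k)*s) * A s)|
        ≤ ∫ s in t..T, |Real.exp (2*k*t) * (Real.exp (-(2*k)*s) * A s)| := by
      have := intervalIntegral.norm_integral_le_integral_norm
        (f := fun s => Real.exp (2*k*t) * (Real.exp (-(2*k)*s) * A s))
        (μ := MeasureTheory.volume) htT
      simp only [Real.norm_eq_abs] at this
      exact this
    have s2 : (∫ s in t..T, |Real.exp (2*k*t) * (Real.exp (-(2*k)*s) * A s)|)
        ≤ ∫ s in t..T, (P * Real.exp (2*k*(t-s)) + Q) :=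
      intervalIntegral.integral_mono_on htT hint1 hint2 hpt
    have s3 : (∫ s in t..T, (P * Real.exp (2*k*(t-s)) + Q))
        = P * (∫ s in t..T, Real.exp (2*k*(t-s))) + (T - t)*Q := by
      rw [intervalIntegral.integral_add (f := fun s => P * Real.exp (2*k*(t-s))) (g := fun _ => Q)
        ((continuous_const.mul hcontE).intervalIntegrable t T)
        (continuous_const.intervalIntegrable t T),
        intervalIntegral.integral_const_mul, intervalIntegral.integral_const, smul_eq_mul]
    have s4 : P * (∫ s in t..T, Real.exp (2*k*(t-s))) ≤ P * (1/(2*k)) :=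
      mul_le_mul_of_nonneg_left hE hP0
    have hQ0' : (0:ℝ) ≤ Q := hQ0
    have s5 : (T - t)*Q ≤ T*Q := by nlinarith
    calc |∫ s in t..T, Real.exp (2*k*t) * (Real.exp (-(2*k)*s) * A s)|
        ≤ ∫ s in t..T, (P * Real.exp (2*k*(t-s)) + Q) := le_trans s1 s2
      _ = P * (∫ s in t..T, Real.exp (2*k*(t-s))) + (T - t)*Q := s3
      _ ≤ P * (1/(2*k)) + T*Q := add_le_add s4 s5
      _ = P * (1/(2*k)) + Q*T := by ring
  -- bound the terminal term
  have hterm1 : |Real.exp (2*k*t) * g T| ≤ (c+q)/2 * B := by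
    rw [hgdef]; dsimp only
    rw [hΛT τ ⟨hτ0, hτT⟩, ← mul_assoc, ← Real.exp_add]
    have he1 : Real.exp (2*k*t + -(2*k)*T) ≤ 1 := by
      rw [Real.exp_le_one_iff]
      nlinarith
    have hl : |lam (T - τ)| ≤ B := hBlam _ ⟨by linarith, by linarith⟩
    rw [abs_mul, abs_mul, abs_of_pos (Real.exp_pos _),
      abs_of_pos (by positivity : (0:ℝ) < (c+q)/2)]
    have hcq : (0:ℝ) ≤ (c+q)/2 := by positivity
    have hfin := mul_le_mul he1 (mul_le_mul_of_nonneg_left hl hcq)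
      (by positivity) zero_le_one
    linarith [hfin]
  -- conclusion
  have hmain : |Λ τ t| ≤ (c+q)/2*B + (P * (1/(2*k)) + Q*T) := by
    rw [hΛeq]
    calc |Real.exp (2*k*t) * g T
        + ∫ s in t..T, Real.exp (2*k*t) * (Real.exp (-(2*k)*s) * A s)|
        ≤ |Real.exp (2*k*t) * g T|
          + |∫ s in t..T, Real.exp (2*k*t) * (Real.exp (-(2*k)*s) * A s)| := abs_add_le _ _
      _ ≤ (c+q)/2*B + (P * (1/(2*k)) + Q*T) := add_le_add hterm1 hItri
  have hPk : P * (1/(2*k)) = (B+2)*(1/k*Mv^2) + q*B/2 := by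
    rw [hPdef]
    field_simp
    ring
  have hMvk : (0:ℝ) ≤ 1/k*Mv^2 := by positivity
  have hQT : Q*T = (η/2*B + q/2*B)*T := by rw [hQdef]
  have hCge : (B+2)*(1/k*Mv^2) ≤ ((c+q)/2*B + q*B/2 + Q*T + (B+2) + 1)*(1/k*Mv^2) := by
    apply mul_le_mul_of_nonneg_right _ hMvk
    linarith [hc1, hc2, hc3]
  rw [hPk] at hmain
  have hgoal : ((c+q)/2*B + q*B/2 + Q*T + (B+2) + 1) * (1 + 1/k*Mv^2)
      = ((c+q)/2*B + q*B/2 + Q*T + (B+2) + 1)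
        + ((c+q)/2*B + q*B/2 + Q*T + (B+2) + 1)*(1/k*Mv^2) := by ring
  calc |Λ τ t| ≤ (c+q)/2*B + ((B+2)*(1/k*Mv^2) + q*B/2 + Q*T) := hmain
    _ ≤ ((c+q)/2*B + q*B/2 + Q*T + (B+2) + 1)
        + ((c+q)/2*B + q*B/2 + Q*T + (B+2) + 1)*(1/k*Mv^2) := by linarith [hCge]
    _ = ((c+q)/2*B + q*B/2 + Q*T + (B+2) + 1) * (1 + 1/k*Mv^2) := hgoal.symm
end
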